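/- Suppose A is a homogeneous subset of a metric space X and B is a compact subset of a metric space Y that is bilipschitz equivalent to A. Then B is homogeneous, and χ(A,B) = 0. -/

import Mathlib

open scoped ENNReal

noncomputable section

open Filter MeasureTheory

/-- A compact set `A` is *homogeneous* with respect to the Borel probability measure `μ`
supported on `A` and constants `lam ≥ 1`, `kappa ∈ (0,1)`, `1 < del ≤ Del`. -/
structure IsHomog {X : Type*} [MetricSpace X] [MeasurableSpace X]
    (A : Set X) (μ : Measure X) (lam kappa del Del : ℝ) : Prop where
  compact : IsCompact A
  diam_pos : 0 < Metric.diam A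
  prob : IsProbabilityMeasure μ
  supp_null : μ Aᶜ = 0
  supp_pos : ∀ x ∈ A, ∀ r : ℝ, 0 < r → 0 < μ (Metric.closedBall x r)
  one_le_lam : 1 ≤ lam
  ratio_le : ∀ x₁ ∈ A, ∀ x₂ ∈ A, ∀ r : ℝ, 0 < r → r ≤ Metric.diam A →
    (μ (Metric.closedBall x₁ r)).toReal ≤ lam * (μ (Metric.closedBall x₂ r)).toReal
  kappa_pos : 0 < kappa
  kappa_lt_one : kappa < 1
  one_lt_del : 1 < del
  del_le_Del : del ≤ Del
  scale_lower : ∀ x ∈ A, ∀ r : ℝ, 0 < r → r ≤ Metric.diam A →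
    del * (μ (Metric.closedBall x (kappa * r))).toReal ≤ (μ (Metric.closedBall x r)).toReal
  scale_upper : ∀ x ∈ A, ∀ r : ℝ, 0 < r → r ≤ Metric.diam A →
    (μ (Metric.closedBall x r)).toReal ≤ Del * (μ (Metric.closedBall x (kappa * r))).toReal

/-- `alphaPt μ x r = log μ(B(x,r)) / log r`. -/
def alphaPt {X : Type*} [MetricSpace X] [MeasurableSpace X]
    (μ : Measure X) (x : X) (r : ℝ) : ℝ :=
  Real.log (μ (Metric.closedBall x r)).toReal / Real.log r

/-- `g ∼ h` : `|h r - g r| = O(1/|log r|)` as `r → 0⁺`. -/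
def EquivNearZero (g h : ℝ → ℝ) : Prop :=
  ∃ C : ℝ, 0 < C ∧ ∃ δ : ℝ, 0 < δ ∧ ∀ r : ℝ, 0 < r → r < δ → |h r - g r| ≤ C / |Real.log r|

/-- `g` is a representative of the equivalence class `[α_A(x,·)]` of the homogeneous set `A`. -/
def IsAlphaRep {X : Type*} [MetricSpace X] [MeasurableSpace X]
    (A : Set X) (μ : Measure X) (g : ℝ → ℝ) : Prop :=
  ∃ x ∈ A, EquivNearZero g (fun r => alphaPt μ x r)

/-- `χ(A,B)` computed from representatives `g` of `[α_A]` and `h` of `[α_B]`. -/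
def chiFun (g h : ℝ → ℝ) : ℝ :=
  Filter.limsup (fun r => |Real.log (g r / h r)|) (nhdsWithin (0 : ℝ) (Set.Ioi 0))

/-- `N(A,r)`: the smallest number of closed balls of radius `r` needed to cover `A`. -/
def coverNum {X : Type*} [MetricSpace X] (A : Set X) (r : ℝ) : ℕ :=
  sInf {m : ℕ | ∃ s : Finset X, s.card = m ∧ A ⊆ ⋃ x ∈ s, Metric.closedBall x r}

/-- Lower box-counting dimension. -/
def lowerBoxDim {X : Type*} [MetricSpace X] (A : Set X) : ℝ :=
  Filter.liminf (fun r : ℝ => Real.log (coverNum A r : ℝ) / (-Real.log r))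
    (nhdsWithin (0 : ℝ) (Set.Ioi 0))

/-- Upper box-counting dimension. -/
def upperBoxDim {X : Type*} [MetricSpace X] (A : Set X) : ℝ :=
  Filter.limsup (fun r : ℝ => Real.log (coverNum A r : ℝ) / (-Real.log r))
    (nhdsWithin (0 : ℝ) (Set.Ioi 0))

/-- Radius-based packing premeasure. -/
def packPre {X : Type*} [MetricSpace X] (A : Set X) (s : ℝ) : ℝ≥0∞ :=
  ⨅ (δ : ℝ) (_ : 0 < δ),
    ⨆ (m : ℕ) (x : Fin m → X) (ρ : Fin m → ℝ) (_ : ∀ i, x i ∈ A)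
      (_ : ∀ i, 0 < ρ i ∧ ρ i ≤ δ)
      (_ : ∀ i j, i ≠ j →
        Disjoint (Metric.closedBall (x i) (ρ i)) (Metric.closedBall (x j) (ρ j))),
      ∑ i, ENNReal.ofReal (ρ i ^ s)

/-- Radius-based packing measure. -/
def packMeasure {X : Type*} [MetricSpace X] (A : Set X) (s : ℝ) : ℝ≥0∞ :=
  ⨅ (F : ℕ → Set X) (_ : A ⊆ ⋃ m, F m), ∑' m, packPre (F m) s

/-- Radius-based packing dimension. -/
def packDim {X : Type*} [MetricSpace X] (A : Set X) : ℝ :=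
  sInf {s : ℝ | 0 ≤ s ∧ packMeasure A s = 0}

/-- Distance between two sets, valued in `ℝ≥0∞`. -/
def setDistE {X : Type*} [MetricSpace X] (E F : Set X) : ℝ≥0∞ :=
  ⨅ (a : X) (_ : a ∈ E) (b : X) (_ : b ∈ F), edist a b

/-- Uniformly disconnected set. -/
def UnifDisconn {X : Type*} [MetricSpace X] (A : Set X) : Prop :=
  ∃ C : ℝ, 1 < C ∧ ∃ rstar : ℝ, 0 < rstar ∧ ∀ x ∈ A, ∀ r : ℝ, 0 < r → r < rstar →
    ∃ E : Set X, E ⊆ A ∧ A ∩ Metric.closedBall x r ⊆ E ∧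
      E ⊆ Metric.closedBall x (C * r) ∧ ENNReal.ofReal r < setDistE E (A \ E)

/-- `A` can be bilipschitz embedded into `B`. -/
def BilipEmbed {X Y : Type*} [MetricSpace X] [MetricSpace Y] (A : Set X) (B : Set Y) : Prop :=
  ∃ (f : X → Y) (L : ℝ), 1 ≤ L ∧ Set.MapsTo f A B ∧ Set.InjOn f A ∧
    ∀ x₁ ∈ A, ∀ x₂ ∈ A,
      dist x₁ x₂ / L ≤ dist (f x₁) (f x₂) ∧ dist (f x₁) (f x₂) ≤ L * dist x₁ x₂

/-- `A` and `B` are bilipschitz equivalent. -/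
def BilipEquivSets {X Y : Type*} [MetricSpace X] [MetricSpace Y] (A : Set X) (B : Set Y) :
    Prop :=
  ∃ (f : X → Y) (L : ℝ), 1 ≤ L ∧ Set.BijOn f A B ∧
    ∀ x₁ ∈ A, ∀ x₂ ∈ A,
      dist x₁ x₂ / L ≤ dist (f x₁) (f x₂) ∧ dist (f x₁) (f x₂) ≤ L * dist x₁ x₂

/-- `A` and `B` are quasi-Lipschitz equivalent. -/
def QuasiLipEquiv {X Y : Type*} [MetricSpace X] [MetricSpace Y] (A : Set X) (B : Set Y) : Prop :=
  ∃ f : X → Y, Set.BijOn f A B ∧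
    ∀ ε : ℝ, 0 < ε → ∃ δ : ℝ, 0 < δ ∧ ∀ x₁ ∈ A, ∀ x₂ ∈ A,
      0 < dist x₁ x₂ → dist x₁ x₂ < δ →
      |Real.log (dist (f x₁) (f x₂)) / Real.log (dist x₁ x₂) - 1| < ε

/-- Ahlfors–David `s`-regular set. -/
def IsADRegular {X : Type*} [MetricSpace X] [MeasurableSpace X] (A : Set X) (s : ℝ) : Prop :=
  IsCompact A ∧ 0 < Metric.diam A ∧
    ∃ (μ : Measure X) (c : ℝ), 1 ≤ c ∧ μ Aᶜ = 0 ∧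
      ∀ x ∈ A, ∀ r : ℝ, 0 < r → r ≤ Metric.diam A →
        ENNReal.ofReal (c⁻¹ * r ^ s) ≤ μ (Metric.closedBall x r) ∧
          μ (Metric.closedBall x r) ≤ ENNReal.ofReal (c * r ^ s)

/-- `n₁ ⋯ n_k` (with `0`-based indexing of the sequence `n`). -/
def prodN (n : ℕ → ℕ) (k : ℕ) : ℕ := ∏ i ∈ Finset.range k, n i

/-- `c₁ ⋯ c_k` (with `0`-based indexing of the sequence `c`). -/
def prodC (c : ℕ → ℝ) (k : ℕ) : ℝ := ∏ i ∈ Finset.range k, c i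

/-- Admissible word for the branching sequence `n`. -/
def AdmWord (n : ℕ → ℕ) (w : List ℕ) : Prop := ∀ i : Fin w.length, w.get i < n i.val

/-- A Moran structure on `J ⊆ ℝ^d` with branching numbers `n` and ratios `c`:
`Jw w` is the basic set indexed by the word `w`. -/
structure IsMoranSystem {d : ℕ} (J : Set (EuclideanSpace ℝ (Fin d))) (n : ℕ → ℕ)
    (c : ℕ → ℝ) (Jw : List ℕ → Set (EuclideanSpace ℝ (Fin d))) : Prop where
  compact : IsCompact J
  int_nonempty : (interior J).Nonempty
  two_le_n : ∀ k, 2 ≤ n k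
  c_pos : ∀ k, 0 < c k
  c_lt_one : ∀ k, c k < 1
  c_inf_pos : ∃ c₀ : ℝ, 0 < c₀ ∧ ∀ k, c₀ ≤ c k
  root : Jw [] = J
  subset : ∀ w : List ℕ, AdmWord n w → ∀ i : ℕ, i < n w.length → Jw (w ++ [i]) ⊆ Jw w
  similar : ∀ w : List ℕ, AdmWord n w → ∀ i : ℕ, i < n w.length →
    ∃ S : EuclideanSpace ℝ (Fin d) → EuclideanSpace ℝ (Fin d),
      (∀ x y, dist (S x) (S y) = c w.length * dist x y) ∧ Jw (w ++ [i]) = S '' Jw w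
  disj_int : ∀ w : List ℕ, AdmWord n w → ∀ i : ℕ, i < n w.length → ∀ j : ℕ, j < n w.length →
    i ≠ j → Disjoint (interior (Jw (w ++ [i]))) (interior (Jw (w ++ [j])))

/-- The Moran set determined by the family `Jw`. -/
def moranSet {d : ℕ} (n : ℕ → ℕ) (Jw : List ℕ → Set (EuclideanSpace ℝ (Fin d))) :
    Set (EuclideanSpace ℝ (Fin d)) :=
  ⋂ k : ℕ, ⋃ (w : List ℕ) (_ : w.length = k ∧ AdmWord n w), Jw w

/-- The index `k` such that `(c₁⋯c_k)·D < r ≤ (c₁⋯c_{k-1})·D`. -/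
def levelOf (c : ℕ → ℝ) (D r : ℝ) : ℕ := sInf {k : ℕ | prodC c k * D < r}

/-- `Φ(r) = n₁⋯n_k` whenever `(c₁⋯c_k)·D < r ≤ (c₁⋯c_{k-1})·D`, where `D = |J|`. -/
def Phi (n : ℕ → ℕ) (c : ℕ → ℝ) (D r : ℝ) : ℕ := prodN n (levelOf c D r)

section Helpers

open Metric Real

variable {X : Type*} [MetricSpace X] [MeasurableSpace X]
variable {A : Set X} {μ : MeasureTheory.Measure X} {lam kappa del Del : ℝ}

namespace IsHomog

lemma ne_top' (hA : IsHomog A μ lam kappa del Del) (s : Set X) : μ s ≠ ⊤ := by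
  haveI := hA.prob; exact MeasureTheory.measure_ne_top μ s

lemma toReal_le_one (hA : IsHomog A μ lam kappa del Del) (s : Set X) : (μ s).toReal ≤ 1 := by
  haveI := hA.prob
  calc (μ s).toReal ≤ (μ Set.univ).toReal :=
        ENNReal.toReal_mono (MeasureTheory.measure_ne_top μ _)
          (MeasureTheory.measure_mono (Set.subset_univ s))
    _ = 1 := by simp

lemma measure_A (hA : IsHomog A μ lam kappa del Del) : μ A = 1 := by
  haveI := hA.prob
  have h1 : μ Set.univ ≤ μ A + μ Aᶜ := by
    rw [← Set.union_compl_self A]; exact MeasureTheory.measure_union_le _ _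
  rw [hA.supp_null, add_zero] at h1
  exact le_antisymm (MeasureTheory.prob_le_one) (by simpa using h1)

lemma one_le_ball (hA : IsHomog A μ lam kappa del Del) {x : X} (hx : x ∈ A) {t : ℝ}
    (ht : Metric.diam A ≤ t) : 1 ≤ (μ (Metric.closedBall x t)).toReal := by
  have hsub : A ⊆ Metric.closedBall x t := fun y hy =>
    Metric.mem_closedBall.2 (le_trans (Metric.dist_le_diam_of_mem hA.compact.isBounded hy hx) ht)
  have : (μ A).toReal ≤ (μ (Metric.closedBall x t)).toReal :=
    ENNReal.toReal_mono (hA.ne_top' _) (MeasureTheory.measure_mono hsub)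
  rwa [hA.measure_A] at this
  
lemma ball_pos (hA : IsHomog A μ lam kappa del Del) {x : X} (hx : x ∈ A) {r : ℝ} (hr : 0 < r) :
    0 < (μ (Metric.closedBall x r)).toReal :=
  ENNReal.toReal_pos (hA.supp_pos x hx r hr).ne' (hA.ne_top' _)

lemma mono' (hA : IsHomog A μ lam kappa del Del) (x : X) {r s : ℝ} (h : r ≤ s) :
    (μ (Metric.closedBall x r)).toReal ≤ (μ (Metric.closedBall x s)).toReal :=
  ENNReal.toReal_mono (hA.ne_top' _)
    (MeasureTheory.measure_mono (Metric.closedBall_subset_closedBall h))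

lemma del_pos (hA : IsHomog A μ lam kappa del Del) : 0 < del := lt_trans one_pos hA.one_lt_del
lemma Del_pos (hA : IsHomog A μ lam kappa del Del) : 0 < Del :=
  lt_of_lt_of_le hA.del_pos hA.del_le_Del
lemma one_le_Del (hA : IsHomog A μ lam kappa del Del) : 1 ≤ Del :=
  le_trans hA.one_lt_del.le hA.del_le_Del

lemma iter_upper (hA : IsHomog A μ lam kappa del Del) (m : ℕ) :
    ∀ x ∈ A, ∀ r : ℝ, 0 < r → r ≤ Metric.diam A →
      (μ (Metric.closedBall x r)).toReal ≤ Del ^ m * (μ (Metric.closedBall x (kappa ^ m * r))).toReal := by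
  induction m with
  | zero => intro x hx r hr hrD; simp
  | succ m ih =>
    intro x hx r hr hrD
    have hκ0 := hA.kappa_pos
    have hκr : 0 < kappa * r := by positivity
    have hκrD : kappa * r ≤ Metric.diam A :=
      le_trans (by nlinarith [hA.kappa_lt_one]) hrD
    have h1 := hA.scale_upper x hx r hr hrD
    have h2 := ih x hx (kappa * r) hκr hκrD
    have he : kappa ^ m * (kappa * r) = kappa ^ (m + 1) * r := by ring
    rw [he] at h2
    calc (μ (Metric.closedBall x r)).toReal
        ≤ Del * (μ (Metric.closedBall x (kappa * r))).toReal := h1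
      _ ≤ Del * (Del ^ m * (μ (Metric.closedBall x (kappa ^ (m + 1) * r))).toReal) := by
          exact mul_le_mul_of_nonneg_left h2 hA.Del_pos.le
      _ = Del ^ (m + 1) * (μ (Metric.closedBall x (kappa ^ (m + 1) * r))).toReal := by ring

lemma iter_lower (hA : IsHomog A μ lam kappa del Del) (m : ℕ) :
    ∀ x ∈ A, ∀ r : ℝ, 0 < r → r ≤ Metric.diam A →
      del ^ m * (μ (Metric.closedBall x (kappa ^ m * r))).toReal ≤ (μ (Metric.closedBall x r)).toReal := by
  induction m with
  | zero => intro x hx r hr hrD; simp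
  | succ m ih =>
    intro x hx r hr hrD
    have hκ0 := hA.kappa_pos
    have hκr : 0 < kappa * r := by positivity
    have hκrD : kappa * r ≤ Metric.diam A :=
      le_trans (by nlinarith [hA.kappa_lt_one]) hrD
    have h1 := hA.scale_lower x hx r hr hrD
    have h2 := ih x hx (kappa * r) hκr hκrD
    have he : kappa ^ m * (kappa * r) = kappa ^ (m + 1) * r := by ring
    rw [he] at h2
    calc del ^ (m + 1) * (μ (Metric.closedBall x (kappa ^ (m + 1) * r))).toReal
        = del * (del ^ m * (μ (Metric.closedBall x (kappa ^ (m + 1) * r))).toReal) := by ring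
      _ ≤ del * (μ (Metric.closedBall x (kappa * r))).toReal :=
          mul_le_mul_of_nonneg_left h2 hA.del_pos.le
      _ ≤ (μ (Metric.closedBall x r)).toReal := h1

lemma upcomp (hA : IsHomog A μ lam kappa del Del) {c : ℝ} (hc : 1 ≤ c) :
    ∃ K : ℝ, 1 ≤ K ∧ ∀ x ∈ A, ∀ r : ℝ, 0 < r →
      (μ (Metric.closedBall x (c * r))).toReal ≤ K * (μ (Metric.closedBall x r)).toReal := by
  have hc0 : 0 < c := lt_of_lt_of_le one_pos hc
  obtain ⟨m, hm⟩ := exists_pow_lt_of_lt_one (show (0:ℝ) < 1 / c by positivity) hA.kappa_lt_one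
  refine ⟨Del ^ m, one_le_pow₀ hA.one_le_Del, ?_⟩
  intro x hx r hr
  have hD0 : 0 < Metric.diam A := hA.diam_pos
  set t := min (c * r) (Metric.diam A) with hts
  have ht0 : 0 < t := lt_min (by positivity) hD0
  have htD : t ≤ Metric.diam A := min_le_right _ _
  have h1 : (μ (Metric.closedBall x (c * r))).toReal ≤ (μ (Metric.closedBall x t)).toReal := by
    rcases le_total (c * r) (Metric.diam A) with h | h
    · rw [hts, min_eq_left h]
    · rw [hts, min_eq_right h]
      exact le_trans (hA.toReal_le_one _) (hA.one_le_ball hx le_rfl)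
  have h2 := hA.iter_upper m x hx t ht0 htD
  have hκm : (0:ℝ) ≤ kappa ^ m := pow_nonneg hA.kappa_pos.le m
  have h3 : kappa ^ m * t ≤ r := by
    have h4 : kappa ^ m * t ≤ kappa ^ m * (c * r) :=
      mul_le_mul_of_nonneg_left (min_le_left _ _) hκm
    have h5 : kappa ^ m * (c * r) ≤ (1 / c) * (c * r) :=
      mul_le_mul_of_nonneg_right hm.le (by positivity)
    have h6 : (1 / c) * (c * r) = r := by field_simp
    linarith
  have h7 : (μ (Metric.closedBall x (kappa ^ m * t))).toReal ≤ (μ (Metric.closedBall x r)).toReal :=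
    hA.mono' x h3
  have hDelm : (0:ℝ) ≤ Del ^ m := pow_nonneg hA.Del_pos.le m
  calc (μ (Metric.closedBall x (c * r))).toReal ≤ (μ (Metric.closedBall x t)).toReal := h1
    _ ≤ Del ^ m * (μ (Metric.closedBall x (kappa ^ m * t))).toReal := h2
    _ ≤ Del ^ m * (μ (Metric.closedBall x r)).toReal := mul_le_mul_of_nonneg_left h7 hDelm

lemma log_le' (hA : IsHomog A μ lam kappa del Del) :
    ∃ β C : ℝ, 0 < β ∧ 0 ≤ C ∧ ∀ x ∈ A, ∀ r : ℝ, 0 < r → r ≤ Metric.diam A →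
      Real.log (μ (Metric.closedBall x r)).toReal ≤ β * Real.log r + C := by
  have hD0 : 0 < Metric.diam A := hA.diam_pos
  have hκ0 := hA.kappa_pos
  have hκ1 := hA.kappa_lt_one
  set k := -Real.log kappa with hk
  have hk0 : 0 < k := by rw [hk]; linarith [Real.log_neg hκ0 hκ1]
  have hld : 0 < Real.log del := Real.log_pos hA.one_lt_del
  set D := Metric.diam A with hD
  refine ⟨Real.log del / k, Real.log del * (1 + |Real.log D| / k), by positivity, by positivity, ?_⟩
  intro x hx r hr hrD
  set t := (Real.log D - Real.log r) / k with ht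
  have ht0 : 0 ≤ t := div_nonneg (by linarith [Real.log_le_log hr hrD]) hk0.le
  set m := Nat.floor t with hm
  have hmt : (m : ℝ) ≤ t := Nat.floor_le ht0
  have hm1 : t - 1 < (m : ℝ) := Nat.sub_one_lt_floor t
  have hrm : r ≤ kappa ^ m * D := by
    have hlog : Real.log r ≤ Real.log (kappa ^ m * D) := by
      rw [Real.log_mul (by positivity) hD0.ne', Real.log_pow]
      have h1 : (m : ℝ) * k ≤ Real.log D - Real.log r := by
        calc (m : ℝ) * k ≤ t * k := mul_le_mul_of_nonneg_right hmt hk0.le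
          _ = Real.log D - Real.log r := by rw [ht]; field_simp
      rw [hk] at h1; linarith
    exact (Real.log_le_log_iff hr (by positivity)).1 hlog
  have h2 : (μ (Metric.closedBall x r)).toReal ≤ (μ (Metric.closedBall x (kappa ^ m * D))).toReal :=
    hA.mono' x hrm
  have h3 : del ^ m * (μ (Metric.closedBall x (kappa ^ m * D))).toReal ≤ 1 :=
    le_trans (hA.iter_lower m x hx D hD0 le_rfl) (hA.toReal_le_one _)
  have hdp : (0:ℝ) < del ^ m := pow_pos hA.del_pos m
  have h4 : (μ (Metric.closedBall x r)).toReal ≤ 1 / del ^ m := by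
    rw [le_div_iff₀ hdp]
    calc (μ (Metric.closedBall x r)).toReal * del ^ m
        ≤ (μ (Metric.closedBall x (kappa ^ m * D))).toReal * del ^ m :=
          mul_le_mul_of_nonneg_right h2 hdp.le
      _ = del ^ m * (μ (Metric.closedBall x (kappa ^ m * D))).toReal := by ring
      _ ≤ 1 := h3
  have h5 : Real.log (μ (Metric.closedBall x r)).toReal ≤ -((m : ℝ) * Real.log del) := by
    have := Real.log_le_log (hA.ball_pos hx hr) h4
    rwa [one_div, Real.log_inv, Real.log_pow] at this
  have h6 : -((m : ℝ) * Real.log del) ≤ -(t - 1) * Real.log del := by nlinarith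
  have h7 : -(t - 1) * Real.log del
      = (Real.log del / k) * Real.log r + (Real.log del - (Real.log del / k) * Real.log D) := by
    rw [ht]; field_simp; ring
  have h8 : Real.log del - (Real.log del / k) * Real.log D
      ≤ Real.log del * (1 + |Real.log D| / k) := by
    have h9 : -(Real.log D) ≤ |Real.log D| := neg_le_abs _
    have h10 : (0:ℝ) ≤ Real.log del / k := by positivity
    have h11 : -((Real.log del / k) * Real.log D) ≤ (Real.log del / k) * |Real.log D| := by
      nlinarith
    have h12 : Real.log del * (1 + |Real.log D| / k)
        = Real.log del + (Real.log del / k) * |Real.log D| := by field_simp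
    linarith
  linarith

end IsHomog

lemma abs_log_le_of_ratio {p q K : ℝ} (hp : 0 < p) (hq : 0 < q) (hK : 1 ≤ K)
    (h1 : p ≤ K * q) (h2 : q ≤ K * p) : |Real.log p - Real.log q| ≤ Real.log K := by
  have hK0 : 0 < K := lt_of_lt_of_le one_pos hK
  have l1 : Real.log p ≤ Real.log K + Real.log q := by
    calc Real.log p ≤ Real.log (K * q) := Real.log_le_log hp h1
      _ = Real.log K + Real.log q := Real.log_mul hK0.ne' hq.ne'
  have l2 : Real.log q ≤ Real.log K + Real.log p := by
    calc Real.log q ≤ Real.log (K * p) := Real.log_le_log hq h2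
      _ = Real.log K + Real.log p := Real.log_mul hK0.ne' hp.ne'
  rw [abs_le]; constructor <;> linarith

lemma abs_log_sub_log_le' {a b m : ℝ} (hm : 0 < m) (ha : m ≤ a) (hb : m ≤ b) :
    |Real.log a - Real.log b| ≤ |a - b| / m := by
  wlog hab : b ≤ a generalizing a b
  · rw [abs_sub_comm, abs_sub_comm a b]; exact this hb ha (le_of_not_ge hab)
  have ha0 : 0 < a := lt_of_lt_of_le hm ha
  have hb0 : 0 < b := lt_of_lt_of_le hm hb
  have h1 : Real.log a - Real.log b ≤ (a - b) / b := by
    rw [← Real.log_div ha0.ne' hb0.ne']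
    have h2 := Real.log_le_sub_one_of_pos (show 0 < a / b by positivity)
    have h3 : a / b - 1 = (a - b) / b := by field_simp
    linarith
  have h2 : (a - b) / b ≤ (a - b) / m := by
    gcongr
  have h3 : 0 ≤ Real.log a - Real.log b := sub_nonneg.2 (Real.log_le_log hb0 hab)
  rw [abs_of_nonneg h3, abs_of_nonneg (sub_nonneg.2 hab)]
  linarith

lemma abs_div_log {p q r : ℝ} (hr0 : 0 < r) (hr1 : r < 1) :
    |p / Real.log r - q / Real.log r| = |p - q| / (-Real.log r) := by
  have h : Real.log r < 0 := Real.log_neg hr0 hr1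
  rw [div_sub_div_same, abs_div, abs_of_neg h]

lemma div_le_div_of_le_neg {a b c : ℝ} (hc : c < 0) (h : a ≤ b) : b / c ≤ a / c := by
  have hc' : 0 < -c := by linarith
  have h2 : a / (-c) ≤ b / (-c) := by gcongr
  rw [div_neg, div_neg] at h2
  linarith

lemma div_le_div_of_nonneg_left' {a b c : ℝ} (h : a ≤ b) (hc : 0 < c) : a / c ≤ b / c := by
  gcongr


end Helpers

set_option maxHeartbeats 1000000

/-- A compact set bilipschitz equivalent to a homogeneous set is homogeneous, and
`χ(A,B) = 0`. -/
theorem statement8 {X Y : Type*} [MetricSpace X] [MeasurableSpace X] [BorelSpace X]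
    [MetricSpace Y] [MeasurableSpace Y] [BorelSpace Y]
    (A : Set X) (B : Set Y) (μ : Measure X) (lam kappa del Del : ℝ)
    (hA : IsHomog A μ lam kappa del Del) (hB : IsCompact B)
    (hbil : BilipEquivSets A B) :
    ∃ (ν : Measure Y) (lam' kappa' del' Del' : ℝ),
      IsHomog B ν lam' kappa' del' Del' ∧
      ∀ gA gB : ℝ → ℝ, IsAlphaRep A μ gA → IsAlphaRep B ν gB → chiFun gA gB = 0 := by
  classical
  haveI := hA.prob
  obtain ⟨f, L, hL, hbij, hfd⟩ := hbil
  have hL0 : 0 < L := lt_of_lt_of_le one_pos hL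
  have hAc : IsCompact A := hA.compact
  have hAmeas : MeasurableSet A := hAc.isClosed.measurableSet
  have hcont : ContinuousOn f A := by
    have hlip : LipschitzOnWith (Real.toNNReal L) f A := by
      apply LipschitzOnWith.of_dist_le_mul
      intro x hx y hy
      have h := (hfd x hx y hy).2
      rwa [Real.coe_toNNReal L hL0.le]
    exact hlip.continuousOn
  have haem : AEMeasurable f μ := by
    have h1 : μ.restrict A = μ := by
      apply Measure.restrict_eq_self_of_ae_mem
      rw [MeasureTheory.ae_iff]
      exact hA.supp_null
    have h2 := hcont.aemeasurable (μ := μ) hAmeas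
    rwa [h1] at h2
  set ν : Measure Y := μ.map f with hνdef
  have hmap : ∀ s : Set Y, MeasurableSet s → ν s = μ (f ⁻¹' s) := fun s hs =>
    MeasureTheory.Measure.map_apply_of_aemeasurable haem hs
  haveI hνp : IsProbabilityMeasure ν := Measure.isProbabilityMeasure_map haem
  have hinterA : ∀ s : Set X, μ (s ∩ A) = μ s := by
    intro s
    apply le_antisymm (measure_mono Set.inter_subset_left)
    have h1 : μ s ≤ μ (s ∩ A) + μ (s \ A) := measure_le_inter_add_diff μ s A
    have h2 : μ (s \ A) ≤ μ Aᶜ := measure_mono fun z hz => hz.2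
    rw [hA.supp_null] at h2
    have h3 : μ (s \ A) = 0 := le_antisymm h2 zero_le
    rw [h3, add_zero] at h1
    exact h1
  have hBb := hB.isBounded
  have hdAB : Metric.diam A ≤ L * Metric.diam B := by
    apply Metric.diam_le_of_forall_dist_le (by positivity)
    intro x hx y hy
    have h1 := (hfd x hx y hy).1
    have h2 : dist (f x) (f y) ≤ Metric.diam B :=
      Metric.dist_le_diam_of_mem hBb (hbij.mapsTo hx) (hbij.mapsTo hy)
    have h3 : dist x y / L ≤ Metric.diam B := le_trans h1 h2
    calc dist x y = L * (dist x y / L) := by field_simp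
      _ ≤ L * Metric.diam B := mul_le_mul_of_nonneg_left h3 hL0.le
  have hdB0 : 0 < Metric.diam B := by nlinarith [hA.diam_pos]
  have hdBA : Metric.diam B ≤ L * Metric.diam A := by
    apply Metric.diam_le_of_forall_dist_le (mul_nonneg hL0.le Metric.diam_nonneg)
    intro y₁ hy₁ y₂ hy₂
    obtain ⟨x₁, hx₁, rfl⟩ := hbij.surjOn hy₁
    obtain ⟨x₂, hx₂, rfl⟩ := hbij.surjOn hy₂
    calc dist (f x₁) (f x₂) ≤ L * dist x₁ x₂ := (hfd x₁ hx₁ x₂ hx₂).2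
      _ ≤ L * Metric.diam A :=
        mul_le_mul_of_nonneg_left (Metric.dist_le_diam_of_mem hAc.isBounded hx₁ hx₂) hL0.le
  have hsand_lo : ∀ x ∈ A, ∀ r : ℝ, 0 < r →
      (μ (Metric.closedBall x (r / L))).toReal ≤ (ν (Metric.closedBall (f x) r)).toReal := by
    intro x hx r hr
    rw [hmap _ measurableSet_closedBall]
    apply ENNReal.toReal_mono (MeasureTheory.measure_ne_top μ _)
    rw [← hinterA (Metric.closedBall x (r / L))]
    apply measure_mono
    rintro z ⟨hz1, hz2⟩
    have h1 := (hfd z hz2 x hx).2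
    rw [Metric.mem_closedBall] at hz1
    simp only [Set.mem_preimage, Metric.mem_closedBall]
    have h4 : L * dist z x ≤ L * (r / L) := mul_le_mul_of_nonneg_left hz1 hL0.le
    have h5 : L * (r / L) = r := by field_simp
    linarith
  have hsand_hi : ∀ x ∈ A, ∀ r : ℝ, 0 < r →
      (ν (Metric.closedBall (f x) r)).toReal ≤ (μ (Metric.closedBall x (L * r))).toReal := by
    intro x hx r hr
    rw [hmap _ measurableSet_closedBall]
    apply ENNReal.toReal_mono (MeasureTheory.measure_ne_top μ _)
    rw [← hinterA (f ⁻¹' Metric.closedBall (f x) r)]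
    apply measure_mono
    rintro z ⟨hz1, hz2⟩
    rw [Set.mem_preimage, Metric.mem_closedBall] at hz1
    have h1 := (hfd z hz2 x hx).1
    rw [Metric.mem_closedBall]
    have h2 : dist z x / L ≤ r := le_trans h1 hz1
    calc dist z x = L * (dist z x / L) := by field_simp
      _ ≤ L * r := mul_le_mul_of_nonneg_left h2 hL0.le
  obtain ⟨K1, hK1, hK1p⟩ := hA.upcomp hL
  obtain ⟨K2, hK2, hK2p⟩ := hA.upcomp (show (1:ℝ) ≤ L ^ 2 by nlinarith)
  have hκ0 := hA.kappa_pos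
  have hκ1 := hA.kappa_lt_one
  obtain ⟨K4, hK4, hK4p⟩ := hA.upcomp (show (1:ℝ) ≤ L ^ 4 / kappa by
    rw [le_div_iff₀ hκ0]
    nlinarith [one_le_pow₀ hL (n := 4)])
  have hνtop : ∀ s : Set Y, ν s ≠ ⊤ := fun s => MeasureTheory.measure_ne_top ν s
  have hνposball : ∀ y ∈ B, ∀ r : ℝ, 0 < r → 0 < ν (Metric.closedBall y r) := by
    intro y hy r hr
    obtain ⟨x, hx, rfl⟩ := hbij.surjOn hy
    have h1 := hsand_lo x hx r hr
    have h2 : 0 < (μ (Metric.closedBall x (r / L))).toReal := hA.ball_pos hx (by positivity)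
    have h3 : 0 < (ν (Metric.closedBall (f x) r)).toReal := lt_of_lt_of_le h2 h1
    exact (ENNReal.toReal_pos_iff.1 h3).1
  have hrL_le : ∀ r : ℝ, r ≤ Metric.diam B → r / L ≤ Metric.diam A := by
    intro r h
    rw [div_le_iff₀ hL0]
    calc r ≤ Metric.diam B := h
      _ ≤ L * Metric.diam A := hdBA
      _ = Metric.diam A * L := by ring
  have hBhom : IsHomog B ν (K2 * lam) (kappa / L ^ 2) del (max del K4) := by
    refine ⟨hB, hdB0, hνp, ?_, ?_, ?_, ?_, ?_, ?_, hA.one_lt_del, le_max_left _ _, ?_, ?_⟩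
    · rw [hmap _ hB.isClosed.measurableSet.compl]
      apply measure_mono_null _ hA.supp_null
      intro z hz
      exact fun hzA => hz (hbij.mapsTo hzA)
    · exact hνposball
    · nlinarith [hA.one_le_lam]
    · intro y₁ hy₁ y₂ hy₂ r hr hrB
      obtain ⟨x₁, hx₁, rfl⟩ := hbij.surjOn hy₁
      obtain ⟨x₂, hx₂, rfl⟩ := hbij.surjOn hy₂
      have hrL : 0 < r / L := by positivity
      have e1 := hsand_hi x₁ hx₁ r hr
      have e2 : (μ (Metric.closedBall x₁ (L * r))).toReal
          ≤ K2 * (μ (Metric.closedBall x₁ (r / L))).toReal := by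
        have h := hK2p x₁ hx₁ (r / L) hrL
        have heq : L ^ 2 * (r / L) = L * r := by field_simp
        rwa [heq] at h
      have e3 := hA.ratio_le x₁ hx₁ x₂ hx₂ (r / L) hrL (hrL_le r hrB)
      have e4 := hsand_lo x₂ hx₂ r hr
      calc (ν (Metric.closedBall (f x₁) r)).toReal
          ≤ (μ (Metric.closedBall x₁ (L * r))).toReal := e1
        _ ≤ K2 * (μ (Metric.closedBall x₁ (r / L))).toReal := e2
        _ ≤ K2 * (lam * (μ (Metric.closedBall x₂ (r / L))).toReal) :=
            mul_le_mul_of_nonneg_left e3 (by linarith)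
        _ = K2 * lam * (μ (Metric.closedBall x₂ (r / L))).toReal := by ring
        _ ≤ K2 * lam * (ν (Metric.closedBall (f x₂) r)).toReal :=
            mul_le_mul_of_nonneg_left e4 (by nlinarith [hA.one_le_lam])
    · positivity
    · rw [div_lt_one (by positivity)]
      nlinarith
    · intro y hy r hr hrB
      obtain ⟨x, hx, rfl⟩ := hbij.surjOn hy
      have hrL : 0 < r / L := by positivity
      have e1 := hsand_hi x hx (kappa / L ^ 2 * r) (by positivity)
      have heq : L * (kappa / L ^ 2 * r) = kappa * (r / L) := by field_simp
      rw [heq] at e1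
      have e2 := hA.scale_lower x hx (r / L) hrL (hrL_le r hrB)
      have e3 := hsand_lo x hx r hr
      calc del * (ν (Metric.closedBall (f x) (kappa / L ^ 2 * r))).toReal
          ≤ del * (μ (Metric.closedBall x (kappa * (r / L)))).toReal :=
            mul_le_mul_of_nonneg_left e1 hA.del_pos.le
        _ ≤ (μ (Metric.closedBall x (r / L))).toReal := e2
        _ ≤ (ν (Metric.closedBall (f x) r)).toReal := e3
    · intro y hy r hr hrB
      obtain ⟨x, hx, rfl⟩ := hbij.surjOn hy
      have hs : 0 < kappa * r / L ^ 3 := by positivity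
      have e1 := hsand_hi x hx r hr
      have e2 := hK4p x hx (kappa * r / L ^ 3) hs
      have heq : L ^ 4 / kappa * (kappa * r / L ^ 3) = L * r := by field_simp
      rw [heq] at e2
      have e3 := hsand_lo x hx (kappa / L ^ 2 * r) (by positivity)
      have heq2 : kappa / L ^ 2 * r / L = kappa * r / L ^ 3 := by field_simp
      rw [heq2] at e3
      calc (ν (Metric.closedBall (f x) r)).toReal
          ≤ (μ (Metric.closedBall x (L * r))).toReal := e1
        _ ≤ K4 * (μ (Metric.closedBall x (kappa * r / L ^ 3))).toReal := e2
        _ ≤ K4 * (ν (Metric.closedBall (f x) (kappa / L ^ 2 * r))).toReal :=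
            mul_le_mul_of_nonneg_left e3 (by linarith)
        _ ≤ max del K4 * (ν (Metric.closedBall (f x) (kappa / L ^ 2 * r))).toReal :=
            mul_le_mul_of_nonneg_right (le_max_right _ _) ENNReal.toReal_nonneg
  refine ⟨ν, K2 * lam, kappa / L ^ 2, del, max del K4, hBhom, ?_⟩
  intro gA gB hgA hgB
  obtain ⟨xA, hxA, CA, hCA0, dA, hdA0, hEA⟩ := hgA
  obtain ⟨yB, hyB, CB, hCB0, dB, hdB0', hEB⟩ := hgB
  obtain ⟨xB, hxB, hfxB⟩ := hbij.surjOn hyB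
  obtain ⟨βμ, Cμ, hβμ, hCμ, hdecμ⟩ := hA.log_le'
  obtain ⟨βν, Cν, hβν, hCν, hdecν⟩ := hBhom.log_le'
  have hloglam : 0 ≤ Real.log lam := Real.log_nonneg hA.one_le_lam
  have hlogK1 : 0 ≤ Real.log K1 := Real.log_nonneg hK1
  set Ctot := CA + Real.log lam + Real.log K1 + CB with hCtot
  have hCtot0 : 0 < Ctot := by rw [hCtot]; linarith
  set bM := min (βμ / 2) (βν / 2) with hbM
  have hbM0 : 0 < bM := lt_min (by linarith) (by linarith)
  set M := max (2 * (Cμ + CA) / βμ) (2 * (Cν + CB) / βν) with hM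
  set ε := min (min dA dB)
      (min (min (Metric.diam A) (Metric.diam B)) (min 1 (Real.exp (-M)))) with hε
  have hε0 : 0 < ε :=
    lt_min (lt_min hdA0 hdB0')
      (lt_min (lt_min hA.diam_pos hdB0) (lt_min one_pos (Real.exp_pos _)))
  have key : ∀ r : ℝ, 0 < r → r < ε → |Real.log (gA r / gB r)| ≤ Ctot / bM / (-Real.log r) := by
    intro r hr0 hrε
    have hrdA : r < dA := lt_of_lt_of_le hrε (le_trans (min_le_left _ _) (min_le_left _ _))
    have hrdB : r < dB := lt_of_lt_of_le hrε (le_trans (min_le_left _ _) (min_le_right _ _))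
    have hrDA : r ≤ Metric.diam A := le_of_lt (lt_of_lt_of_le hrε
      (le_trans (min_le_right _ _) (le_trans (min_le_left _ _) (min_le_left _ _))))
    have hrDB : r ≤ Metric.diam B := le_of_lt (lt_of_lt_of_le hrε
      (le_trans (min_le_right _ _) (le_trans (min_le_left _ _) (min_le_right _ _))))
    have hr1 : r < 1 := lt_of_lt_of_le hrε
      (le_trans (min_le_right _ _) (le_trans (min_le_right _ _) (min_le_left _ _)))
    have hrM : r < Real.exp (-M) := lt_of_lt_of_le hrε
      (le_trans (min_le_right _ _) (le_trans (min_le_right _ _) (min_le_right _ _)))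
    have hlogr : Real.log r < 0 := Real.log_neg hr0 hr1
    have hnl : 0 < -Real.log r := by linarith
    have hMl : M < -Real.log r := by
      have h := Real.log_lt_log hr0 hrM
      rw [Real.log_exp] at h
      linarith
    have E1 : |gA r - alphaPt μ xA r| ≤ CA / (-Real.log r) := by
      have h := hEA r hr0 hrdA
      rw [abs_of_neg hlogr] at h
      rw [abs_sub_comm]
      exact h
    have E4 : |alphaPt ν yB r - gB r| ≤ CB / (-Real.log r) := by
      have h := hEB r hr0 hrdB
      rwa [abs_of_neg hlogr] at h
    have hPA : 0 < (μ (Metric.closedBall xA r)).toReal := hA.ball_pos hxA hr0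
    have hPB : 0 < (μ (Metric.closedBall xB r)).toReal := hA.ball_pos hxB hr0
    have hQ : 0 < (ν (Metric.closedBall yB r)).toReal :=
      ENNReal.toReal_pos (hνposball yB hyB r hr0).ne' (hνtop _)
    have E2 : |alphaPt μ xA r - alphaPt μ xB r| ≤ Real.log lam / (-Real.log r) := by
      unfold alphaPt
      rw [abs_div_log hr0 hr1]
      have h1 := hA.ratio_le xA hxA xB hxB r hr0 hrDA
      have h2 := hA.ratio_le xB hxB xA hxA r hr0 hrDA
      have h3 := abs_log_le_of_ratio hPA hPB hA.one_le_lam h1 h2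
      exact div_le_div_of_nonneg_left' h3 hnl
    have E3 : |alphaPt μ xB r - alphaPt ν yB r| ≤ Real.log K1 / (-Real.log r) := by
      unfold alphaPt
      rw [abs_div_log hr0 hr1]
      have h1 : (μ (Metric.closedBall xB r)).toReal ≤ K1 * (ν (Metric.closedBall yB r)).toReal := by
        have ha := hK1p xB hxB (r / L) (by positivity)
        have heq : L * (r / L) = r := by field_simp
        rw [heq] at ha
        have hb := hsand_lo xB hxB r hr0
        rw [hfxB] at hb
        calc (μ (Metric.closedBall xB r)).toReal
            ≤ K1 * (μ (Metric.closedBall xB (r / L))).toReal := ha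
          _ ≤ K1 * (ν (Metric.closedBall yB r)).toReal :=
              mul_le_mul_of_nonneg_left hb (by linarith)
      have h2 : (ν (Metric.closedBall yB r)).toReal ≤ K1 * (μ (Metric.closedBall xB r)).toReal := by
        have ha := hsand_hi xB hxB r hr0
        rw [hfxB] at ha
        have hb := hK1p xB hxB r hr0
        linarith
      have h3 := abs_log_le_of_ratio hPB hQ hK1 h1 h2
      exact div_le_div_of_nonneg_left' h3 hnl
    have u1 := abs_sub_le (gA r) (alphaPt μ xA r) (gB r)
    have u2 := abs_sub_le (alphaPt μ xA r) (alphaPt μ xB r) (gB r)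
    have u3 := abs_sub_le (alphaPt μ xB r) (alphaPt ν yB r) (gB r)
    have hsum : CA / (-Real.log r) + Real.log lam / (-Real.log r) + Real.log K1 / (-Real.log r)
        + CB / (-Real.log r) = Ctot / (-Real.log r) := by rw [hCtot]; ring
    have Esum : |gA r - gB r| ≤ Ctot / (-Real.log r) := by
      linarith only [u1, u2, u3, E1, E2, E3, E4, hsum]
    have glowA : βμ / 2 ≤ gA r := by
      have d1 := hdecμ xA hxA r hr0 hrDA
      have d2 : (βμ * Real.log r + Cμ) / Real.log r ≤ alphaPt μ xA r :=
        div_le_div_of_le_neg hlogr d1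
      have d3 : (βμ * Real.log r + Cμ) / Real.log r = βμ + Cμ / Real.log r := by
        rw [add_div, mul_div_assoc, div_self (ne_of_lt hlogr), mul_one]
      have d4 : Cμ / Real.log r = -(Cμ / (-Real.log r)) := by
        rw [div_neg, neg_neg]
      have d5 : (Cμ + CA) / (-Real.log r) ≤ βμ / 2 := by
        have h6 : 2 * (Cμ + CA) / βμ ≤ M := le_max_left _ _
        have h7 : 2 * (Cμ + CA) / βμ < -Real.log r := lt_of_le_of_lt h6 hMl
        rw [div_lt_iff₀ hβμ] at h7
        rw [div_le_iff₀ hnl]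
        linarith only [h7]
      have dd : (Cμ + CA) / (-Real.log r) = Cμ / (-Real.log r) + CA / (-Real.log r) :=
        add_div _ _ _
      have hE1 := (abs_le.1 E1).1
      rw [d3, d4] at d2
      linarith only [d2, d5, dd, hE1]
    have glowB : βν / 2 ≤ gB r := by
      have d1 := hdecν yB hyB r hr0 hrDB
      have d2 : (βν * Real.log r + Cν) / Real.log r ≤ alphaPt ν yB r :=
        div_le_div_of_le_neg hlogr d1
      have d3 : (βν * Real.log r + Cν) / Real.log r = βν + Cν / Real.log r := by
        rw [add_div, mul_div_assoc, div_self (ne_of_lt hlogr), mul_one]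
      have d4 : Cν / Real.log r = -(Cν / (-Real.log r)) := by
        rw [div_neg, neg_neg]
      have d5 : (Cν + CB) / (-Real.log r) ≤ βν / 2 := by
        have h6 : 2 * (Cν + CB) / βν ≤ M := le_max_right _ _
        have h7 : 2 * (Cν + CB) / βν < -Real.log r := lt_of_le_of_lt h6 hMl
        rw [div_lt_iff₀ hβν] at h7
        rw [div_le_iff₀ hnl]
        linarith only [h7]
      have dd : (Cν + CB) / (-Real.log r) = Cν / (-Real.log r) + CB / (-Real.log r) :=
        add_div _ _ _
      have hE4 := (abs_le.1 E4).2
      rw [d3, d4] at d2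
      linarith only [d2, d5, dd, hE4]
    have hgA0 : 0 < gA r := lt_of_lt_of_le (by linarith) glowA
    have hgB0 : 0 < gB r := lt_of_lt_of_le (by linarith) glowB
    have hbMgA : bM ≤ gA r := le_trans (min_le_left _ _) glowA
    have hbMgB : bM ≤ gB r := le_trans (min_le_right _ _) glowB
    rw [Real.log_div hgA0.ne' hgB0.ne']
    have h8 := abs_log_sub_log_le' hbM0 hbMgA hbMgB
    have h9 : |gA r - gB r| / bM ≤ Ctot / (-Real.log r) / bM := by
      gcongr
    have h10 : Ctot / (-Real.log r) / bM = Ctot / bM / (-Real.log r) := by ring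
    linarith only [h8, h9, h10]
  unfold chiFun
  apply Filter.Tendsto.limsup_eq
  have hev : ∀ᶠ r in nhdsWithin (0:ℝ) (Set.Ioi 0), 0 < r ∧ r < ε := by
    filter_upwards [eventually_mem_nhdsWithin,
      eventually_nhdsWithin_of_eventually_nhds (eventually_lt_nhds hε0)] with r h1 h2
    exact ⟨h1, h2⟩
  apply tendsto_of_tendsto_of_tendsto_of_le_of_le' (g := fun _ : ℝ => (0:ℝ))
      (h := fun r : ℝ => Ctot / bM / (-Real.log r)) tendsto_const_nhds ?_ ?_ ?_
  · apply Filter.Tendsto.div_atTop tendsto_const_nhds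
    exact tendsto_neg_atBot_atTop.comp Real.tendsto_log_nhdsGT_zero
  · exact Filter.Eventually.of_forall fun r => abs_nonneg _
  · exact hev.mono fun r hr => key r hr.1 hr.2


end
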